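/- Given two feasible solutions S and S* of a DBMIS instance with unit bounds, the subsets of S ∪ S* that are feasible for the DBMIS instance are exactly the common independent sets of Δ+1 matroids on ground set S ∪ S*: the restriction of M to S ∪ S*, together with Δ partition matroids arising from a partition of the conflict-graph edges into Δ matchings, each part being a conflicting pair {v, u} with rank bound 1. -/

import Mathlib

open scoped Classical

/-- Feasibility for DBMIS. -/
def DBMISFeasible {V : Type*} (M : Matroid V) (H : Finset (Finset V))
    (g : Finset V → ℕ) (S : Finset V) : Prop :=
  M.Indep ↑S ∧ ∀ e ∈ H, (S ∩ e).card ≤ g e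

/-- `(v, u)` is a conflict pair for the feasible solutions `S, S*`: `v ∈ S`, `u ∈ S*`,
`v ≠ u` and some hyperedge contains both. -/
def ConflictPair {V : Type*} (H : Finset (Finset V)) (S Sstar : Finset V)
    (p : V × V) : Prop :=
  p.1 ∈ S ∧ p.2 ∈ Sstar ∧ p.1 ≠ p.2 ∧ ∃ e ∈ H, p.1 ∈ e ∧ p.2 ∈ e

/-- For DBMIS with unit upper bounds and two feasible solutions `S, S*`, given a
partition of the conflict-graph edges into `Δ` matchings `N 0, …, N (Δ-1)`, the
feasible subsets of `S ∪ S*` are exactly the common independent sets of the `Δ+1`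
matroids: the restriction of `M` to `S ∪ S*`, together with, for each `i`, the
partition matroid whose rank-1 parts are the pairs of the matching `N i`. -/
theorem dbmis_unit_bounds_matroid_intersection {V : Type*} [DecidableEq V]
    (M : Matroid V) (H : Finset (Finset V)) (g : Finset V → ℕ) (Δ : ℕ)
    (hdeg : ∀ x : V, (H.filter (fun e => x ∈ e)).card ≤ Δ)
    (hg : ∀ e ∈ H, g e ≤ 1)
    (S Sstar : Finset V)
    (hS : DBMISFeasible M H g S) (hSstar : DBMISFeasible M H g Sstar)
    (N : Fin Δ → Finset (V × V))
    (hNconf : ∀ i, ∀ p ∈ N i, ConflictPair H S Sstar p)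
    (hNcover : ∀ p : V × V, ConflictPair H S Sstar p → ∃ i, p ∈ N i)
    (hNdisj : ∀ i j, i ≠ j → Disjoint (N i) (N j))
    (hNmatching : ∀ i, ∀ p ∈ N i, ∀ q ∈ N i, p ≠ q → p.1 ≠ q.1 ∧ p.2 ≠ q.2) :
    ∀ X ⊆ S ∪ Sstar,
      (DBMISFeasible M H g X ↔
        (M.Indep ↑X ∧ ∀ i : Fin Δ, ∀ p ∈ N i, ¬ (p.1 ∈ X ∧ p.2 ∈ X))) := by
  intro X hX
  have hi : (fun a b => Classical.propDecidable (a = b) : DecidableEq V) =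
      ‹DecidableEq V› := Subsingleton.elim _ _
  obtain ⟨hSi, hSb⟩ := hS
  obtain ⟨hSsi, hSsb⟩ := hSstar
  simp only [DBMISFeasible, hi] at hSb hSsb ⊢
  rw [hi] at hSb hSsb ⊢
  constructor
  · rintro ⟨hind, hbd⟩
    refine ⟨hind, fun i p hp ⟨h1, h2⟩ => ?_⟩
    obtain ⟨-, -, hne, e, he, he1, he2⟩ := hNconf i p hp
    have : 2 ≤ (X ∩ e).card := by
      refine Finset.one_lt_card.mpr ⟨p.1, ?_, p.2, ?_, hne⟩ <;>
        simp [Finset.mem_inter, *]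
    have := (hbd e he).trans (hg e he)
    omega
  · rintro ⟨hind, hmat⟩
    refine ⟨hind, fun e he => ?_⟩
    by_contra hlt
    push_neg at hlt
    have hge : g e ≤ 1 := hg e he
    have hS1 : (S ∩ e).card ≤ g e := hSb e he
    have hS2 : (Sstar ∩ e).card ≤ g e := hSsb e he
    interval_cases h : g e
    · -- g e = 0 : X ∩ e nonempty gives contradiction
      obtain ⟨x, hx⟩ := Finset.card_pos.mp (by omega : 0 < (X ∩ e).card)
      rw [Finset.mem_inter] at hx
      rcases Finset.mem_union.mp (hX hx.1) with hxS | hxS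
      · have := Finset.card_pos.mpr ⟨x, Finset.mem_inter.mpr ⟨hxS, hx.2⟩⟩
        omega
      · have := Finset.card_pos.mpr ⟨x, Finset.mem_inter.mpr ⟨hxS, hx.2⟩⟩
        omega
    · -- g e = 1 : two distinct elements x, y in X ∩ e
      obtain ⟨x, hx, y, hy, hxy⟩ := Finset.one_lt_card.mp (show 1 < (X ∩ e).card by omega)
      rw [Finset.mem_inter] at hx hy
      have key : ∀ a b : V, a ≠ b → a ∈ X → b ∈ X → a ∈ e → b ∈ e →
          ¬ (a ∈ S ∧ b ∈ S) := by
        intro a b hab ha hb hae hbe ⟨haS, hbS⟩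
        have : 2 ≤ (S ∩ e).card := Finset.one_lt_card.mpr
          ⟨a, Finset.mem_inter.mpr ⟨haS, hae⟩, b, Finset.mem_inter.mpr ⟨hbS, hbe⟩, hab⟩
        omega
      have key' : ∀ a b : V, a ≠ b → a ∈ X → b ∈ X → a ∈ e → b ∈ e →
          ¬ (a ∈ Sstar ∧ b ∈ Sstar) := by
        intro a b hab ha hb hae hbe ⟨haS, hbS⟩
        have : 2 ≤ (Sstar ∩ e).card := Finset.one_lt_card.mpr
          ⟨a, Finset.mem_inter.mpr ⟨haS, hae⟩, b, Finset.mem_inter.mpr ⟨hbS, hbe⟩, hab⟩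
        omega
      -- produce a conflict pair
      have conf : ∀ a b : V, a ≠ b → a ∈ X → b ∈ X → a ∈ e → b ∈ e →
          a ∈ S → b ∈ Sstar → False := by
        intro a b hab ha hb hae hbe haS hbS
        obtain ⟨i, hi⟩ := hNcover (a, b) ⟨haS, hbS, hab, e, he, hae, hbe⟩
        exact hmat i (a, b) hi ⟨ha, hb⟩
      rcases Finset.mem_union.mp (hX hx.1) with hxS | hxS <;>
        rcases Finset.mem_union.mp (hX hy.1) with hyS | hyS
      · exact key x y hxy hx.1 hy.1 hx.2 hy.2 ⟨hxS, hyS⟩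
      · exact conf x y hxy hx.1 hy.1 hx.2 hy.2 hxS hyS
      · exact conf y x hxy.symm hy.1 hx.1 hy.2 hx.2 hyS hxS
      · exact key' x y hxy hx.1 hy.1 hx.2 hy.2 ⟨hxS, hyS⟩
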